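/- Let F be the cdf of a probability measure on ℝ^d with marginals F_1,...,F_d, let S ⊆ ℝ^d and (π_s)_{s∈S} be a family in [0,1] such that F(s) = π_s for all s ∈ S. Then for all x ∈ ℝ^d, F(x) ≤ min_i F_i(x_i) ∧ inf{ π_s + Σ_{i=1}^d (F_i(x_i) − F_i(s_i))^+ : s ∈ S }. -/

import Mathlib

open MeasureTheory

/-- Improved upper Fréchet–Hoeffding bound for the class `F^{S,π}`:
`F(x) ≤ min_i F_i(x_i) ∧ inf{π_s + Σ_i (F_i(x_i) − F_i(s_i))⁺ : s ∈ S}`. -/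
theorem improved_frechet_hoeffding_upper {d : ℕ} (μ : Measure (Fin d → ℝ))
    [IsProbabilityMeasure μ]
    (S : Set (Fin d → ℝ)) (π : (Fin d → ℝ) → ℝ)
    (hπ : ∀ s ∈ S, π s ∈ Set.Icc (0 : ℝ) 1)
    (hF : ∀ s ∈ S, (μ {y : Fin d → ℝ | ∀ j, y j ≤ s j}).toReal = π s)
    (x : Fin d → ℝ) :
    (∀ i, (μ {y : Fin d → ℝ | ∀ j, y j ≤ x j}).toReal ≤ (μ {y : Fin d → ℝ | y i ≤ x i}).toReal) ∧
    (∀ s ∈ S, (μ {y : Fin d → ℝ | ∀ j, y j ≤ x j}).toReal ≤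
      π s + ∑ i : Fin d,
        max ((μ {y : Fin d → ℝ | y i ≤ x i}).toReal - (μ {y : Fin d → ℝ | y i ≤ s i}).toReal) 0) := by
  have hm1 : ∀ (i : Fin d) (c : ℝ), MeasurableSet {y : Fin d → ℝ | y i ≤ c} :=
    fun i c => (measurable_pi_apply i) measurableSet_Iic
  constructor
  · intro i
    exact ENNReal.toReal_mono (measure_ne_top μ _) (measure_mono fun y hy => hy i)
  · intro s hs
    set A := {y : Fin d → ℝ | ∀ j, y j ≤ x j} with hA
    set B := {y : Fin d → ℝ | ∀ j, y j ≤ s j} with hB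
    set C := fun i : Fin d =>
      {y : Fin d → ℝ | y i ≤ x i} \ {y : Fin d → ℝ | y i ≤ s i} with hC
    have hsub : A ⊆ B ∪ ⋃ i, C i := by
      intro y hy
      by_cases h : ∀ j, y j ≤ s j
      · exact Or.inl h
      · push_neg at h
        obtain ⟨j, hj⟩ := h
        exact Or.inr (Set.mem_iUnion.2 ⟨j, hy j, not_le.2 hj⟩)
    have h1 : μ A ≤ μ B + ∑ i, μ (C i) :=
      le_trans (measure_mono hsub) (le_trans (measure_union_le _ _)
        (add_le_add_right (measure_iUnion_fintype_le _ _) _))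
    have hne : μ B + ∑ i, μ (C i) ≠ ⊤ :=
      ENNReal.add_ne_top.2 ⟨measure_ne_top μ _,
        (ENNReal.sum_lt_top.2 fun i _ => measure_lt_top μ _).ne⟩
    have h2 : (μ A).toReal ≤ (μ B).toReal + ∑ i, (μ (C i)).toReal := by
      have := ENNReal.toReal_mono hne h1
      rwa [ENNReal.toReal_add (measure_ne_top μ _)
        (ENNReal.sum_lt_top.2 fun i _ => measure_lt_top μ _).ne,
        ENNReal.toReal_sum (fun i _ => measure_ne_top μ _)] at this
    rw [← hF s hs]
    refine h2.trans (add_le_add_right (Finset.sum_le_sum fun i _ => ?_) _)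
    by_cases hsx : s i ≤ x i
    · have hss : {y : Fin d → ℝ | y i ≤ s i} ⊆ {y : Fin d → ℝ | y i ≤ x i} :=
        fun y hy => le_trans hy hsx
      have : μ (C i) = μ {y : Fin d → ℝ | y i ≤ x i} - μ {y : Fin d → ℝ | y i ≤ s i} :=
        measure_diff hss (hm1 i (s i)).nullMeasurableSet (measure_ne_top μ _)
      rw [this, ENNReal.toReal_sub_of_le (measure_mono hss) (measure_ne_top μ _)]
      exact le_max_left _ _
    · have : C i = ∅ := by
        ext y
        simp only [hC, Set.mem_diff, Set.mem_setOf_eq, Set.mem_empty_iff_false, iff_false,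
          not_and, not_not]
        intro hy
        exact le_of_lt (lt_of_le_of_lt hy (lt_of_not_ge hsx))
      rw [this]
      simp only [measure_empty, ENNReal.toReal_zero]
      exact le_max_right ((μ {y : Fin d → ℝ | y i ≤ x i}).toReal - (μ {y : Fin d → ℝ | y i ≤ s i}).toReal) 0
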